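/- arXiv:2401.10527 — 4 statements merged into one kernel-verified Lean document; each statement's English description precedes it below -/
import Mathlib

section
/- Let t, r₁, r₂ be positive integers with t ≤ ⌊r₁/2⌋ and t ≤ ⌊r₂/2⌋. Let e, e' ∈ 𝔽[X₁,X₂] with supp(e) ⊆ I, supp(e') ⊆ I, ω(e) ≤ t and ω(e') ≤ t, and let τ ∈ I. If e(α̅^{n+τ}) = e'(α̅^{n+τ}) for all n ∈ 𝒮(t), then e = e'. -/
/-- A monomial order on `ℕ × ℕ`: a linear well-order compatible with addition that
refines the componentwise partial order. -/
structure MonomialOrder2 where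
  le : ℕ × ℕ → ℕ × ℕ → Prop
  le_refl : ∀ a, le a a
  le_trans : ∀ a b c, le a b → le b c → le a c
  le_antisymm : ∀ a b, le a b → le b a → a = b
  le_total : ∀ a b, le a b ∨ le b a
  wf : WellFounded (fun a b : ℕ × ℕ => le a b ∧ a ≠ b)
  add_right : ∀ a b k, le a b → le (a + k) (b + k)
  refines : ∀ a b : ℕ × ℕ, a.1 ≤ b.1 → a.2 ≤ b.2 → le a b

/-- Strict version of the monomial order. -/
def MonomialOrder2.lt (T : MonomialOrder2) (a b : ℕ × ℕ) : Prop :=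
  T.le a b ∧ a ≠ b

section Defs

variable {L : Type*} [Field L]

/-- `IsLP T f s` says `s` is the leading power product exponent of `f` w.r.t. `T`. -/
def IsLP (T : MonomialOrder2) (f : AddMonoidAlgebra L (ℕ × ℕ)) (s : ℕ × ℕ) : Prop :=
  s ∈ f.coeff.support ∧ ∀ m ∈ f.coeff.support, T.le m s

/-- `recEval U f s n` is `f[U]_n`, where `s` is the leading power product exponent of `f`. -/
noncomputable def recEval (U : ℕ × ℕ → L) (f : AddMonoidAlgebra L (ℕ × ℕ))
    (s n : ℕ × ℕ) : L :=
  if s.1 ≤ n.1 ∧ s.2 ≤ n.2 then ∑ m ∈ f.coeff.support, f.coeff m * U (m + n - s) else 0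

/-- `Lambda T U l` is `Λ(u^l)`, the set of nonzero polynomials valid at all
`n` with `LP f ⪯ n` and `n <_T l`. -/
def Lambda (T : MonomialOrder2) (U : ℕ × ℕ → L) (l : ℕ × ℕ) :
    Set (AddMonoidAlgebra L (ℕ × ℕ)) :=
  { f | f ≠ 0 ∧ ∀ s n : ℕ × ℕ, IsLP T f s → s.1 ≤ n.1 → s.2 ≤ n.2 → T.lt n l →
      recEval U f s n = 0 }

/-- `𝔏(U)`: nonzero polynomials generating the whole array `U`. -/
def LambdaU (T : MonomialOrder2) (U : ℕ × ℕ → L) :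
    Set (AddMonoidAlgebra L (ℕ × ℕ)) :=
  { f | f ≠ 0 ∧ ∀ (s n : ℕ × ℕ), IsLP T f s → recEval U f s n = 0 }

/-- The footprint `Δ(U)` of the ideal of linear recurring relations of `U`. -/
def footprint (T : MonomialOrder2) (U : ℕ × ℕ → L) : Set (ℕ × ℕ) :=
  { n | ∀ f s, f ∈ LambdaU T U → IsLP T f s → ¬(s.1 ≤ n.1 ∧ s.2 ≤ n.2) }

/-- A doubly periodic array of period `r₁ × r₂`. -/
def DoublyPeriodic (r₁ r₂ : ℕ) (U : ℕ × ℕ → L) : Prop :=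
  ∀ n m : ℕ × ℕ, n.1 % r₁ = m.1 % r₁ → n.2 % r₂ = m.2 % r₂ → U n = U m

/-- Evaluation of a bivariate polynomial with coefficients in `L` at `(x, y)`. -/
noncomputable def evalAtL (f : AddMonoidAlgebra L (ℕ × ℕ)) (x y : L) : L :=
  ∑ m ∈ f.coeff.support, f.coeff m * x ^ m.1 * y ^ m.2

end Defs

/-- Evaluation of a bivariate polynomial with coefficients in `F` at a point of `L`. -/
noncomputable def evalAt {F L : Type*} [Field F] [Field L] [Algebra F L]
    (e : AddMonoidAlgebra F (ℕ × ℕ)) (x y : L) : L :=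
  ∑ s ∈ e.coeff.support, algebraMap F L (e.coeff s) * x ^ s.1 * y ^ s.2

/-- The index box `I = {0,…,r₁−1} × {0,…,r₂−1}`. -/
def Ibox (r₁ r₂ : ℕ) : Set (ℕ × ℕ) := { p | p.1 < r₁ ∧ p.2 < r₂ }

/-- `s^(1),…,s^(d)` (0-indexed: `s 0, …, s (d-1)`) is a sequence of defining points. -/
def IsDefPoints (d : ℕ) (s : ℕ → ℕ × ℕ) : Prop :=
  0 < d ∧ (∀ i j, i < j → j < d → (s j).1 < (s i).1) ∧
    (∀ i j, i < j → j < d → (s i).2 < (s j).2) ∧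
    (s (d - 1)).1 = 0 ∧ (s 0).2 = 0

/-- The delta-set of a sequence of defining points. -/
def deltaSet (d : ℕ) (s : ℕ → ℕ × ℕ) : Set (ℕ × ℕ) :=
  { m | ∃ i, i + 1 < d ∧ m.1 + 1 ≤ (s i).1 ∧ m.2 + 1 ≤ (s (i + 1)).2 }

/-- `IsMinimalSet T U l d s f`: `{f 0, …, f (d-1)}` is a minimal set of polynomials
for `u^l`, with defining points `s 0, …, s (d-1)`. -/
def IsMinimalSet {L : Type*} [Field L] (T : MonomialOrder2) (U : ℕ × ℕ → L) (l : ℕ × ℕ)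
    (d : ℕ) (s : ℕ → ℕ × ℕ) (f : ℕ → AddMonoidAlgebra L (ℕ × ℕ)) : Prop :=
  IsDefPoints d s ∧
    (∀ i, i < d → f i ∈ Lambda T U l ∧ IsLP T (f i) (s i)) ∧
    (∀ g sg, IsLP T g sg → sg ∈ deltaSet d s → g ∉ Lambda T U l)

/-- The set of indexes `𝒮(t)`. -/
def Sset (t : ℕ) : Set (ℕ × ℕ) :=
  { p | (p.1 = 0 ∧ p.2 ≤ 2 * t - 1) ∨ (p.2 = 0 ∧ p.1 ≤ 2 * t - 1) ∨
      (1 ≤ p.1 ∧ 1 ≤ p.2 ∧ p.1 + p.2 ≤ t) }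


lemma arith_final (t a k : ℕ) (ht : 1 ≤ t) (ha1 : 1 ≤ a) (ha2t : a ≤ 2 * t)
    (hk : k = if a = 1 then 2 * t else max 1 (t + 2 - a)) : 2 * t < a * (k + 1) := by
  rcases Nat.eq_or_lt_of_le ha1 with h | h
  · rw [hk, if_pos h.symm, ← h]; omega
  · have h2 : 2 ≤ a := h
    rw [hk, if_neg (by omega)]
    rcases le_or_gt a (t + 1) with hle | hgt
    · rw [max_eq_right (by omega : 1 ≤ t + 2 - a)]
      obtain ⟨a', rfl⟩ : ∃ a', a = a' + 2 := ⟨a - 2, by omega⟩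
      obtain ⟨b', hb'⟩ : ∃ b', t + 2 - (a' + 2) = b' + 1 := ⟨t - (a' + 1), by omega⟩
      rw [hb']
      have hteq : t = a' + b' + 1 := by omega
      subst hteq
      nlinarith [Nat.zero_le (a' * b')]
    · rw [show max 1 (t + 2 - a) = 1 from by omega]; omega

lemma vandermonde_zero {L : Type*} [Field L] {ι : Type*} [DecidableEq ι] (s : Finset ι)
    (x c : ι → L) (hx : Set.InjOn x s)
    (h : ∀ n < s.card, ∑ i ∈ s, c i * x i ^ n = 0) :
    ∀ i ∈ s, c i = 0 := by
  intro i₀ hi₀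
  have hcard : 1 ≤ s.card := Finset.card_pos.mpr ⟨i₀, hi₀⟩
  set P := Lagrange.basis s x i₀ with hP
  have hdeg : P.natDegree < s.card := by
    have h1 := Lagrange.degree_basis hx hi₀
    have h2 : P.natDegree ≤ s.card - 1 :=
      Polynomial.natDegree_le_iff_degree_le.2 (by rw [h1])
    omega
  have hc : c i₀ = ∑ i ∈ s, c i * P.eval (x i) := by
    rw [Finset.sum_eq_single i₀]
    · rw [Lagrange.eval_basis_self hx hi₀, mul_one]
    · intro j hj hne
      rw [Lagrange.eval_basis_of_ne (Ne.symm hne) hj, mul_zero]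
    · intro hni; exact absurd hi₀ hni
  rw [hc]
  have : ∀ i ∈ s, c i * P.eval (x i)
      = ∑ n ∈ Finset.range s.card, P.coeff n * (c i * x i ^ n) := by
    intro i _
    rw [Polynomial.eval_eq_sum_range' hdeg, Finset.mul_sum]
    exact Finset.sum_congr rfl fun n _ => by ring
  rw [Finset.sum_congr rfl this, Finset.sum_comm]
  refine Finset.sum_eq_zero fun n hn => ?_
  rw [← Finset.mul_sum, h n (Finset.mem_range.mp hn), mul_zero]

/-- two polynomials of weight `≤ t` supported in `I` agreeing on the
syndrome values indexed by `𝒮(t)` (shifted by `τ`) coincide. -/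
theorem stmt_14 {F L : Type*} [Field F] [Fintype F] [Field L] [Algebra F L]
    (r₁ r₂ t : ℕ) (ht : 1 ≤ t) (ht₁ : t ≤ r₁ / 2) (ht₂ : t ≤ r₂ / 2)
    (hq : Nat.Coprime (r₁ * r₂) (Fintype.card F))
    (α₁ α₂ : L) (hα₁ : IsPrimitiveRoot α₁ r₁) (hα₂ : IsPrimitiveRoot α₂ r₂)
    (e e' : AddMonoidAlgebra F (ℕ × ℕ))
    (he : ↑e.coeff.support ⊆ Ibox r₁ r₂) (he' : ↑e'.coeff.support ⊆ Ibox r₁ r₂)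
    (hw : e.coeff.support.card ≤ t) (hw' : e'.coeff.support.card ≤ t)
    (τ : ℕ × ℕ) (hτ : τ ∈ Ibox r₁ r₂)
    (heq : ∀ n ∈ Sset t, evalAt e (α₁ ^ (n.1 + τ.1)) (α₂ ^ (n.2 + τ.2)) =
      evalAt e' (α₁ ^ (n.1 + τ.1)) (α₂ ^ (n.2 + τ.2))) :
    e = e' := by
  classical
  by_contra hne
  set φ := algebraMap F L with hφ
  set f : AddMonoidAlgebra F (ℕ × ℕ) := e - e' with hfdef
  have hf0 : f ≠ 0 := sub_ne_zero.mpr hne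
  have hr₁ : 2 ≤ r₁ := by omega
  have hr₂ : 2 ≤ r₂ := by omega
  have hα₁0 : α₁ ≠ 0 := hα₁.ne_zero (by omega)
  have hα₂0 : α₂ ≠ 0 := hα₂.ne_zero (by omega)
  have hφinj : Function.Injective φ := RingHom.injective φ
  -- support facts
  have hsub : f.coeff.support ⊆ e.coeff.support ∪ e'.coeff.support := Finsupp.support_sub
  have hbox : ∀ m ∈ f.coeff.support, m.1 < r₁ ∧ m.2 < r₂ := by
    intro m hm
    rcases Finset.mem_union.mp (hsub hm) with h | h
    · exact he h
    · exact he' h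
  have hN : f.coeff.support.card ≤ 2 * t := by
    calc f.coeff.support.card ≤ (e.coeff.support ∪ e'.coeff.support).card := Finset.card_le_card hsub
      _ ≤ e.coeff.support.card + e'.coeff.support.card := Finset.card_union_le _ _
      _ ≤ 2 * t := by omega
  -- evaluations of f vanish on Sset t
  have hE : ∀ n ∈ Sset t, evalAt f (α₁ ^ (n.1 + τ.1)) (α₂ ^ (n.2 + τ.2)) = 0 := by
    intro n hn
    have hsubeval : ∀ x y : L, evalAt f x y = evalAt e x y - evalAt e' x y := by
      intro x y
      show (e.coeff - e'.coeff).sum (fun s c => φ c * x ^ s.1 * y ^ s.2)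
        = e.coeff.sum (fun s c => φ c * x ^ s.1 * y ^ s.2)
          - e'.coeff.sum (fun s c => φ c * x ^ s.1 * y ^ s.2)
      refine Finsupp.sum_sub_index fun a b₁ b₂ => ?_
      rw [map_sub]; ring
    rw [hsubeval, heq n hn, sub_self]
  -- rows
  set R : Finset ℕ := f.coeff.support.image Prod.fst with hR
  have hmaps : ∀ m ∈ f.coeff.support, m.1 ∈ R := fun m hm => Finset.mem_image_of_mem _ hm
  have ha1 : 1 ≤ R.card := by
    obtain ⟨m, hm⟩ := Finsupp.support_nonempty_iff.mpr (fun h => hf0 (AddMonoidAlgebra.coeff_eq_zero.mp h))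
    exact Finset.card_pos.mpr ⟨m.1, hmaps m hm⟩
  have ha2t : R.card ≤ 2 * t := le_trans Finset.card_image_le hN
  set a := R.card with ha
  set k : ℕ := if a = 1 then 2 * t else max 1 (t + 2 - a) with hk
  have hk1 : 1 ≤ k := by rw [hk]; split <;> omega
  -- membership in Sset
  have hmem : ∀ n₁ < a, ∀ n₂ < k, ((n₁, n₂) : ℕ × ℕ) ∈ Sset t := by
    intro n₁ hn₁ n₂ hn₂
    have hkval : (a = 1 ∧ k = 2 * t) ∨ (2 ≤ a ∧ k = max 1 (t + 2 - a)) := by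
      rw [hk]; rcases Nat.eq_or_lt_of_le ha1 with h | h
      · left; simp [← h]
      · right; rw [if_neg (by omega)]; omega
    show (n₁ = 0 ∧ n₂ ≤ 2 * t - 1) ∨ (n₂ = 0 ∧ n₁ ≤ 2 * t - 1) ∨
      (1 ≤ n₁ ∧ 1 ≤ n₂ ∧ n₁ + n₂ ≤ t)
    rcases hkval with ⟨h1, h2⟩ | ⟨h1, h2⟩ <;> omega
  -- row values
  set rowval : ℕ → ℕ → L := fun i n₂ =>
    ∑ m ∈ f.coeff.support.filter (fun m => m.1 = i), φ (f.coeff m) * α₂ ^ (m.2 * (n₂ + τ.2))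
    with hrowval
  -- Step A : row values vanish
  have hrow : ∀ n₂ < k, ∀ i ∈ R, rowval i n₂ = 0 := by
    intro n₂ hn₂ i hi
    have hinj : Set.InjOn (fun i : ℕ => α₁ ^ i) R := by
      intro x hx y hy hxy
      obtain ⟨mx, hmx, hmx1⟩ := Finset.mem_image.mp hx
      obtain ⟨my, hmy, hmy1⟩ := Finset.mem_image.mp hy
      exact hα₁.pow_inj (hmx1 ▸ (hbox mx hmx).1) (hmy1 ▸ (hbox my hmy).1) hxy
    have heqs : ∀ n₁ < a, ∑ i ∈ R,
        (α₁ ^ (i * τ.1) * rowval i n₂) * (α₁ ^ i) ^ n₁ = 0 := by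
      intro n₁ hn₁
      have hgrp : ∑ i ∈ R, (α₁ ^ (i * τ.1) * rowval i n₂) * (α₁ ^ i) ^ n₁
          = evalAt f (α₁ ^ (n₁ + τ.1)) (α₂ ^ (n₂ + τ.2)) := by
        show _ = ∑ m ∈ f.coeff.support,
          φ (f.coeff m) * (α₁ ^ (n₁ + τ.1)) ^ m.1 * (α₂ ^ (n₂ + τ.2)) ^ m.2
        rw [← Finset.sum_fiberwise_of_maps_to hmaps
          (fun m => φ (f.coeff m) * (α₁ ^ (n₁ + τ.1)) ^ m.1 * (α₂ ^ (n₂ + τ.2)) ^ m.2)]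
        refine Finset.sum_congr rfl fun i _ => ?_
        rw [hrowval, Finset.mul_sum, Finset.sum_mul]
        refine Finset.sum_congr rfl fun m hm => ?_
        have hm1 : m.1 = i := (Finset.mem_filter.mp hm).2
        subst hm1
        have hx : (α₁ ^ (n₁ + τ.1)) ^ m.1 = α₁ ^ (m.1 * τ.1) * (α₁ ^ m.1) ^ n₁ := by
          rw [← pow_mul, ← pow_mul, ← pow_add,
            show m.1 * τ.1 + m.1 * n₁ = (n₁ + τ.1) * m.1 from by ring]
        rw [hx]; ring
      rw [hgrp]
      exact hE (n₁, n₂) (hmem n₁ hn₁ n₂ hn₂)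
    have := vandermonde_zero R (fun i : ℕ => α₁ ^ i)
      (fun i => α₁ ^ (i * τ.1) * rowval i n₂) hinj heqs i hi
    have hpow : (α₁ : L) ^ (i * τ.1) ≠ 0 := pow_ne_zero _ hα₁0
    exact (mul_eq_zero.mp this).resolve_left hpow
  -- Step B : each row has at least k+1 elements
  have hrowcard : ∀ i ∈ R, k + 1 ≤ (f.coeff.support.filter (fun m => m.1 = i)).card := by
    intro i hi
    by_contra hlt
    push_neg at hlt
    have hcardk : (f.coeff.support.filter (fun m => m.1 = i)).card ≤ k := by omega
    obtain ⟨m₀, hm₀f, hm₀1⟩ := Finset.mem_image.mp hi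
    have hm₀ : m₀ ∈ f.coeff.support.filter (fun m => m.1 = i) :=
      Finset.mem_filter.mpr ⟨hm₀f, hm₀1⟩
    have hinj : Set.InjOn (fun m : ℕ × ℕ => α₂ ^ m.2)
        (f.coeff.support.filter (fun m => m.1 = i)) := by
      intro x hx y hy hxy
      have hx' := Finset.mem_filter.mp hx
      have hy' := Finset.mem_filter.mp hy
      have h2 : x.2 = y.2 :=
        hα₂.pow_inj (hbox x hx'.1).2 (hbox y hy'.1).2 hxy
      exact Prod.ext (hx'.2.trans hy'.2.symm) h2
    have heqs : ∀ n < (f.coeff.support.filter (fun m => m.1 = i)).card,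
        ∑ m ∈ f.coeff.support.filter (fun m => m.1 = i),
          (φ (f.coeff m) * α₂ ^ (m.2 * τ.2)) * (α₂ ^ m.2) ^ n = 0 := by
      intro n hn
      have : ∑ m ∈ f.coeff.support.filter (fun m => m.1 = i),
          (φ (f.coeff m) * α₂ ^ (m.2 * τ.2)) * (α₂ ^ m.2) ^ n = rowval i n := by
        rw [hrowval]
        refine Finset.sum_congr rfl fun m _ => ?_
        rw [← pow_mul, mul_assoc, ← pow_add,
          show m.2 * τ.2 + m.2 * n = m.2 * (n + τ.2) from by ring]
      rw [this]
      exact hrow n (by omega) i hi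
    have := vandermonde_zero _ _ _ hinj heqs m₀ hm₀
    have hpow : (α₂ : L) ^ (m₀.2 * τ.2) ≠ 0 := pow_ne_zero _ hα₂0
    have : φ (f.coeff m₀) = 0 := (mul_eq_zero.mp this).resolve_right hpow
    have : f.coeff m₀ = 0 := hφinj (by simpa using this)
    exact (Finsupp.mem_support_iff.mp hm₀f) this
  -- Step C : counting
  have hcount : f.coeff.support.card = ∑ i ∈ R, (f.coeff.support.filter (fun m => m.1 = i)).card :=
    Finset.card_eq_sum_card_fiberwise hmaps
  have hge : a * (k + 1) ≤ f.coeff.support.card := by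
    rw [hcount]
    calc a * (k + 1) = ∑ _i ∈ R, (k + 1) := by rw [Finset.sum_const, smul_eq_mul]
      _ ≤ _ := Finset.sum_le_sum hrowcard
  -- final arithmetic: a * (k+1) > 2t
  have hfin : 2 * t < a * (k + 1) := arith_final t a k ht ha1 ha2t hk
  omega
end

section
/- Let t, r₁, r₂ be positive integers with t ≤ ⌊r₁/2⌋ and t ≤ ⌊r₂/2⌋, and let L be a field. Let U, V : ℕ×ℕ → L be doubly periodic arrays of period r₁×r₂ whose footprints satisfy |Δ(U)| ≤ t and |Δ(V)| ≤ t. If U(n) = V(n) for all n ∈ 𝒮(t), then U = V. -/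
section Aux

open Finsupp

namespace Stmt15Aux

variable {L : Type*} [Field L] (T : MonomialOrder2)

/-- `E U f k = Σ_m f_m U(m+k)`: evaluation of the relation `f` at shift `k`. -/
noncomputable def E (U : ℕ × ℕ → L) (f : AddMonoidAlgebra L (ℕ × ℕ)) (k : ℕ × ℕ) : L :=
  f.coeff.sum fun m c => c * U (m + k)

variable {U V : ℕ × ℕ → L}

lemma E_apply (U : ℕ × ℕ → L) (f : AddMonoidAlgebra L (ℕ × ℕ)) (k : ℕ × ℕ) :
    E U f k = ∑ m ∈ f.coeff.support, f.coeff m * U (m + k) := rfl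

lemma E_zero (k : ℕ × ℕ) : E U (0 : AddMonoidAlgebra L (ℕ × ℕ)) k = 0 := by
  simp [E]

lemma E_add (f g : AddMonoidAlgebra L (ℕ × ℕ)) (k : ℕ × ℕ) :
    E U (f + g) k = E U f k + E U g k := by
  unfold E
  rw [AddMonoidAlgebra.coeff_add]
  exact Finsupp.sum_add_index' (fun m => zero_mul _) (fun m c₁ c₂ => add_mul _ _ _)

lemma E_single (a : ℕ × ℕ) (c : L) (k : ℕ × ℕ) :
    E U (AddMonoidAlgebra.single a c) k = c * U (a + k) := by
  unfold E
  rw [AddMonoidAlgebra.coeff_single]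
  exact Finsupp.sum_single_index (by simp)

lemma E_single_mul (a : ℕ × ℕ) (c : L) (g : AddMonoidAlgebra L (ℕ × ℕ)) (k : ℕ × ℕ) :
    E U (AddMonoidAlgebra.single a c * g) k = c * E U g (a + k) := by
  induction g using AddMonoidAlgebra.induction_linear with
  | zero => simp [E_zero]
  | add f g hf hg => rw [mul_add, E_add, E_add, hf, hg, mul_add]
  | single b d =>
      rw [AddMonoidAlgebra.single_mul_single, E_single, E_single, mul_assoc]
      congr 2
      abel

lemma E_mul (f g : AddMonoidAlgebra L (ℕ × ℕ)) (k : ℕ × ℕ) :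
    E U (f * g) k = f.coeff.sum fun a c => c * E U g (a + k) := by
  induction f using AddMonoidAlgebra.induction_linear with
  | zero => simp [E_zero]
  | add f₁ f₂ h1 h2 =>
      rw [add_mul, E_add, h1, h2, AddMonoidAlgebra.coeff_add,
        Finsupp.sum_add_index' (fun m => zero_mul (E U g (m + k)))
          (fun m c₁ c₂ => add_mul c₁ c₂ (E U g (m + k)))]
  | single a c =>
      rw [E_single_mul, AddMonoidAlgebra.coeff_single, Finsupp.sum_single_index (zero_mul (E U g (a + k)))]

lemma E_mul_eq_zero (f g : AddMonoidAlgebra L (ℕ × ℕ)) (hg : ∀ k, E U g k = 0) (k : ℕ × ℕ) :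
    E U (f * g) k = 0 := by
  rw [E_mul]
  simp only [hg, mul_zero, Finsupp.sum_fun_zero]

lemma E_sub_array (f : AddMonoidAlgebra L (ℕ × ℕ)) (k : ℕ × ℕ) :
    E (fun p => U p - V p) f k = E U f k - E V f k := by
  simp [E_apply, mul_sub, Finset.sum_sub_distrib]

/-- From membership in `LambdaU` plus a leading-power witness, all shift evaluations vanish. -/
lemma E_eq_zero_of_mem {f : AddMonoidAlgebra L (ℕ × ℕ)} {s : ℕ × ℕ}
    (hf : f ∈ LambdaU T U) (hs : IsLP T f s) (k : ℕ × ℕ) : E U f k = 0 := by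
  have h := hf.2 s (s + k) hs
  rw [recEval, if_pos ⟨Nat.le_add_right _ _, Nat.le_add_right _ _⟩] at h
  rw [E_apply]
  rw [← h]
  apply Finset.sum_congr rfl
  intro m hm
  congr 2
  ext <;> simp <;> omega

lemma mem_LambdaU {f : AddMonoidAlgebra L (ℕ × ℕ)} (hf0 : f ≠ 0)
    (hE : ∀ k, E U f k = 0) : f ∈ LambdaU T U := by
  refine ⟨hf0, fun s n _ => ?_⟩
  rw [recEval]
  split
  · rename_i hcond
    rw [← hE (n - s), E_apply]
    apply Finset.sum_congr rfl
    intro m hm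
    congr 2
    ext <;> simp <;> omega
  · rfl

lemma not_mem_footprint {n : ℕ × ℕ} (h : n ∉ footprint T U) :
    ∃ f s, f ∈ LambdaU T U ∧ IsLP T f s ∧ s.1 ≤ n.1 ∧ s.2 ≤ n.2 := by
  simp only [footprint, Set.mem_setOf_eq, not_forall] at h
  obtain ⟨f, s, hf, hs, hle⟩ := h
  exact ⟨f, s, hf, hs, not_not.mp (by simpa using hle)⟩

lemma isLP_mul {f g : AddMonoidAlgebra L (ℕ × ℕ)} {a b : ℕ × ℕ}
    (hf : IsLP T f a) (hg : IsLP T g b) : IsLP T (f * g) (a + b) := by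
  classical
  have hcoeff : (f * g).coeff (a + b) = f.coeff a * g.coeff b := by
    rw [AddMonoidAlgebra.mul_apply]
    simp only [Finsupp.sum]
    rw [Finset.sum_eq_single_of_mem a hf.1]
    · rw [Finset.sum_eq_single_of_mem b hg.1]
      · rw [if_pos rfl]
      · intro x₂ hx₂ hne
        exact if_neg fun hc => hne (by
          have : x₂ = b := by
            have h1 := congrArg Prod.fst hc
            have h2 := congrArg Prod.snd hc
            simp at h1 h2
            ext <;> omega
          exact this)
    · intro x₁ hx₁ hne
      apply Finset.sum_eq_zero
      intro x₂ hx₂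
      apply if_neg
      intro hc
      have h1 : T.le (x₁ + x₂) (a + x₂) := T.add_right x₁ a x₂ (hf.2 x₁ hx₁)
      have h2 : T.le (a + x₂) (a + b) := by
        have := T.add_right x₂ b a (hg.2 x₂ hx₂)
        rwa [add_comm x₂ a, add_comm b a] at this
      have h3 : a + x₂ = a + b := T.le_antisymm _ _ h2 (hc ▸ h1)
      have : x₂ = b := by
        have e1 := congrArg Prod.fst h3
        have e2 := congrArg Prod.snd h3
        simp at e1 e2
        ext <;> omega
      subst this
      exact hne (by
        have e1 := congrArg Prod.fst hc
        have e2 := congrArg Prod.snd hc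
        simp at e1 e2
        ext <;> omega)
  constructor
  · rw [Finsupp.mem_support_iff, hcoeff]
    exact mul_ne_zero (Finsupp.mem_support_iff.mp hf.1) (Finsupp.mem_support_iff.mp hg.1)
  · intro m hm
    have := AddMonoidAlgebra.support_coeff_mul_subset f g hm
    rw [Finset.mem_add] at this
    obtain ⟨x, hx, y, hy, rfl⟩ := this
    have h1 : T.le (x + y) (a + y) := T.add_right x a y (hf.2 x hx)
    have h2 : T.le (a + y) (a + b) := by
      have := T.add_right y b a (hg.2 y hy)
      rwa [add_comm y a, add_comm b a] at this
    exact T.le_trans _ _ _ h1 h2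


lemma rel_of_period {r₁ r₂ : ℕ} (hU : DoublyPeriodic r₁ r₂ U) (s : ℕ × ℕ) (hs : s ≠ 0)
    (hper : ∀ k, U (s + k) = U k) :
    ∃ f, f ∈ LambdaU T U ∧ IsLP T f s := by
  classical
  set f0 : AddMonoidAlgebra L (ℕ × ℕ) := AddMonoidAlgebra.single s 1 + AddMonoidAlgebra.single 0 (-1) with hf0def
  have hcoeff : f0.coeff s = 1 := by
    rw [hf0def, AddMonoidAlgebra.coeff_add, Finsupp.add_apply, AddMonoidAlgebra.coeff_single,
      AddMonoidAlgebra.coeff_single, Finsupp.single_eq_same, Finsupp.single_eq_of_ne hs,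
      add_zero]
  refine ⟨f0, ?_, ?_, ?_⟩
  · refine mem_LambdaU T (fun h0 => ?_) (fun k => ?_)
    · rw [h0] at hcoeff
      simp at hcoeff
    · rw [hf0def, E_add, E_single, E_single, one_mul, zero_add, hper k]
      ring
  · exact Finsupp.mem_support_iff.mpr (by rw [hcoeff]; exact one_ne_zero)
  · intro m hm
    rw [hf0def, AddMonoidAlgebra.coeff_add, AddMonoidAlgebra.coeff_single,
      AddMonoidAlgebra.coeff_single] at hm
    rcases Finset.mem_union.mp (Finsupp.support_add hm) with h | h
    · rw [Finset.mem_singleton.mp (Finsupp.support_single_subset h)]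
      exact T.le_refl s
    · rw [Finset.mem_singleton.mp (Finsupp.support_single_subset h)]
      exact T.refines 0 s (Nat.zero_le _) (Nat.zero_le _)

lemma footprint_finite {r₁ r₂ : ℕ} (hU : DoublyPeriodic r₁ r₂ U) (hr₁ : 0 < r₁)
    (hr₂ : 0 < r₂) : (footprint T U).Finite := by
  have hbox : (({p | p.1 < r₁ ∧ p.2 < r₂} : Set (ℕ × ℕ))).Finite :=
    Set.Finite.ofFinset (Finset.range r₁ ×ˢ Finset.range r₂)
      (by intro p; simp [Finset.mem_product])
  refine hbox.subset ?_
  intro n hn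
  by_contra hnbox
  simp only [Set.mem_setOf_eq, not_and_or, not_lt] at hnbox
  rcases hnbox with h | h
  · have hper : ∀ k, U ((r₁, 0) + k) = U k := by
      intro k
      exact hU _ _ (by simp [Nat.add_mod_left]) (by simp)
    obtain ⟨f, hf, hLP⟩ := rel_of_period T hU (r₁, 0)
      (by intro hc; rw [Prod.ext_iff] at hc; simp at hc; omega) hper
    exact hn f (r₁, 0) hf hLP ⟨h, Nat.zero_le _⟩
  · have hper : ∀ k, U ((0, r₂) + k) = U k := by
      intro k
      exact hU _ _ (by simp) (by simp [Nat.add_mod_left])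
    obtain ⟨f, hf, hLP⟩ := rel_of_period T hU (0, r₂)
      (by intro hc; rw [Prod.ext_iff] at hc; simp at hc; omega) hper
    exact hn f (0, r₂) hf hLP ⟨Nat.zero_le _, h⟩

lemma count_le {A B : Set (ℕ × ℕ)} (hA : A.Finite) (hB : B.Finite) {t : ℕ}
    (hAc : A.ncard ≤ t) (hBc : B.ncard ≤ t) (n : ℕ × ℕ)
    (hsplit : ∀ a b : ℕ × ℕ, a + b = n → a ∈ A ∨ b ∈ B) :
    (n.1 + 1) * (n.2 + 1) ≤ 2 * t := by
  classical
  set S : Finset (ℕ × ℕ) := Finset.range (n.1 + 1) ×ˢ Finset.range (n.2 + 1) with hS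
  have hmemS : ∀ a : ℕ × ℕ, a ∈ S ↔ a.1 ≤ n.1 ∧ a.2 ≤ n.2 := by
    intro a
    simp [hS, Finset.mem_product, Nat.lt_succ_iff]
  have hScard : S.card = (n.1 + 1) * (n.2 + 1) := by
    simp [hS]
  have hcover : S ⊆ S.filter (fun a => a ∈ A) ∪ S.filter (fun a => n - a ∈ B) := by
    intro a ha
    have hle := (hmemS a).mp ha
    rcases hsplit a (n - a) (by ext <;> simp <;> omega) with h | h
    · exact Finset.mem_union_left _ (Finset.mem_filter.mpr ⟨ha, h⟩)
    · exact Finset.mem_union_right _ (Finset.mem_filter.mpr ⟨ha, h⟩)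
  have h1 : (S.filter (fun a => a ∈ A)).card ≤ t := by
    refine le_trans (le_trans (Finset.card_le_card (t := hA.toFinset) ?_) ?_) hAc
    · intro a ha
      exact hA.mem_toFinset.mpr (Finset.mem_filter.mp ha).2
    · exact le_of_eq (Set.ncard_eq_toFinset_card A hA).symm
  have h2 : (S.filter (fun a => n - a ∈ B)).card ≤ t := by
    refine le_trans (le_trans (Finset.card_le_card_of_injOn (fun a => n - a)
      (fun a ha => hB.mem_toFinset.mpr (Finset.mem_filter.mp ha).2) ?_) ?_) hBc
    · intro a ha b hb hab
      have ha' := (hmemS a).mp (Finset.mem_filter.mp ha).1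
      have hb' := (hmemS b).mp (Finset.mem_filter.mp hb).1
      have e1 := congrArg Prod.fst hab
      have e2 := congrArg Prod.snd hab
      simp at e1 e2
      ext <;> omega
    · exact le_of_eq (Set.ncard_eq_toFinset_card B hB).symm
  calc (n.1 + 1) * (n.2 + 1) = S.card := hScard.symm
    _ ≤ _ := Finset.card_le_card hcover
    _ ≤ (S.filter (fun a => a ∈ A)).card + (S.filter (fun a => n - a ∈ B)).card :=
        Finset.card_union_le _ _
    _ ≤ 2 * t := by omega

lemma mem_Sset_of_mul {t : ℕ} (ht : 1 ≤ t) {n : ℕ × ℕ}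
    (h : (n.1 + 1) * (n.2 + 1) ≤ 2 * t) : n ∈ Sset t := by
  rcases Nat.eq_zero_or_pos n.1 with h1 | h1
  · left
    constructor
    · exact h1
    · rw [h1] at h; omega
  rcases Nat.eq_zero_or_pos n.2 with h2 | h2
  · right; left
    constructor
    · exact h2
    · rw [h2] at h
      omega
  · right; right
    refine ⟨h1, h2, ?_⟩
    have key : 2 * (n.1 + n.2) ≤ (n.1 + 1) * (n.2 + 1) := by nlinarith
    omega

end Stmt15Aux
end Aux

/-- two doubly periodic arrays of period `r₁ × r₂` with footprints of
size `≤ t` agreeing on `𝒮(t)` coincide. -/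
theorem stmt_15 (T : MonomialOrder2) {L : Type*} [Field L] (r₁ r₂ t : ℕ)
    (ht : 1 ≤ t) (hr₁ : 0 < r₁) (hr₂ : 0 < r₂) (ht₁ : t ≤ r₁ / 2) (ht₂ : t ≤ r₂ / 2)
    (U V : ℕ × ℕ → L) (hU : DoublyPeriodic r₁ r₂ U) (hV : DoublyPeriodic r₁ r₂ V)
    (hfU : (footprint T U).ncard ≤ t) (hfV : (footprint T V).ncard ≤ t)
    (heq : ∀ n ∈ Sset t, U n = V n) :
    U = V := by
  classical
  have hUfin : (footprint T U).Finite := Stmt15Aux.footprint_finite T hU hr₁ hr₂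
  have hVfin : (footprint T V).Finite := Stmt15Aux.footprint_finite T hV hr₁ hr₂
  set W : ℕ × ℕ → L := fun p => U p - V p with hWdef
  have key : ∀ n, W n = 0 := by
    intro n
    refine T.wf.induction (C := fun n => W n = 0) n ?_
    intro x IH
    by_cases hx : x ∈ footprint T W
    · have hsplit : ∀ a b : ℕ × ℕ, a + b = x → a ∈ footprint T U ∨ b ∈ footprint T V := by
        intro a b hab
        by_contra hcon
        push_neg at hcon
        obtain ⟨f, sf, hfU', hLPf, hsf1, hsf2⟩ := Stmt15Aux.not_mem_footprint T hcon.1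
        obtain ⟨g, sg, hgV', hLPg, hsg1, hsg2⟩ := Stmt15Aux.not_mem_footprint T hcon.2
        have hEf : ∀ k, Stmt15Aux.E U f k = 0 := Stmt15Aux.E_eq_zero_of_mem T hfU' hLPf
        have hEg : ∀ k, Stmt15Aux.E V g k = 0 := Stmt15Aux.E_eq_zero_of_mem T hgV' hLPg
        have hLPfg := Stmt15Aux.isLP_mul T hLPf hLPg
        have hmem : f * g ∈ LambdaU T W := by
          refine Stmt15Aux.mem_LambdaU T (fun h0 => ?_) (fun k => ?_)
          · have := hLPfg.1
            rw [h0] at this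
            simp at this
          · have hEV : Stmt15Aux.E V (f * g) k = 0 := Stmt15Aux.E_mul_eq_zero f g hEg k
            have hEU : Stmt15Aux.E U (f * g) k = 0 := by
              rw [mul_comm]
              exact Stmt15Aux.E_mul_eq_zero g f hEf k
            rw [hWdef, Stmt15Aux.E_sub_array, hEU, hEV, sub_zero]
        refine hx (f * g) (sf + sg) hmem hLPfg ⟨?_, ?_⟩
        · have := congrArg Prod.fst hab
          simp only [Prod.fst_add] at this ⊢
          omega
        · have := congrArg Prod.snd hab
          simp only [Prod.snd_add] at this ⊢
          omega
      have hcard := Stmt15Aux.count_le hUfin hVfin hfU hfV x hsplit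
      have hxS : x ∈ Sset t := Stmt15Aux.mem_Sset_of_mul ht hcard
      simp only [hWdef, sub_eq_zero]
      exact heq x hxS
    · obtain ⟨f, s, hfW, hLP, hs1, hs2⟩ := Stmt15Aux.not_mem_footprint T hx
      have h0 := hfW.2 s x hLP
      rw [recEval, if_pos ⟨hs1, hs2⟩] at h0
      have hxeq : s + (x - s) = x := by ext <;> simp <;> omega
      have hrest : ∀ m ∈ f.coeff.support, m ≠ s → f.coeff m * W (m + x - s) = 0 := by
        intro m hm hne
        have hmx : m + x - s = m + (x - s) := by ext <;> simp <;> omega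
        have hle : T.le (m + (x - s)) x := by
          have := T.add_right m s (x - s) (hLP.2 m hm)
          rwa [hxeq] at this
        have hne2 : m + (x - s) ≠ x := by
          intro hc
          apply hne
          have : m + (x - s) = s + (x - s) := by rw [hxeq, hc]
          exact add_right_cancel this
        rw [hmx, IH _ ⟨hle, hne2⟩, mul_zero]
      rw [Finset.sum_eq_single_of_mem s hLP.1 hrest] at h0
      have hsx : s + x - s = x := by ext <;> simp <;> omega
      rw [hsx] at h0
      rcases mul_eq_zero.mp h0 with h | h
      · exact absurd h (Finsupp.mem_support_iff.mp hLP.1)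
      · exact h
  funext n
  have hn := key n
  simp only [hWdef, sub_eq_zero] at hn
  exact hn
end

section
/- Let t, r₁, r₂ be positive integers with t ≤ ⌊r₁/2⌋ and t ≤ ⌊r₂/2⌋. Let D ⊆ I and suppose there exists τ ∈ I such that for every n ∈ 𝒮(t), the pair ((τ₁+n₁) mod r₁, (τ₂+n₂) mod r₂) belongs to D. Then every nonzero c ∈ 𝔽[X₁,X₂] with supp(c) ⊆ I satisfying c(α̅^m) = 0 for all m ∈ D has weight ω(c) ≥ 2t+1. (Equivalently, any abelian code in 𝔽[X₁,X₂]/(X₁^{r₁}−1, X₂^{r₂}−1) whose defining set with respect to α̅ contains τ + 𝒮(t) has minimum distance at least 2t+1.) -/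
lemma pow_mod_cancel {L : Type*} [Monoid L] {zeta : L} {r : ℕ} (h : zeta ^ r = 1) (a : ℕ) :
    zeta ^ (a % r) = zeta ^ a := by
  conv_rhs => rw [← Nat.mod_add_div a r]
  rw [pow_add, pow_mul, h, one_pow, mul_one]

lemma vand {L : Type*} [Field L] {κ : Type*} [DecidableEq κ] (S : Finset κ) (v d : κ → L)
    (hv : Set.InjOn v S)
    (h : ∀ j < S.card, ∑ k ∈ S, d k * v k ^ j = 0) :
    ∀ k ∈ S, d k = 0 := by
  intro k₀ hk₀
  classical
  set P : Polynomial L := ∏ k ∈ S.erase k₀, (Polynomial.X - Polynomial.C (v k)) with hP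
  have hPdeg : P.natDegree < S.card := by
    have h1 : P.natDegree = (S.erase k₀).card := by
      rw [hP, Polynomial.natDegree_prod]
      · simp [Polynomial.natDegree_X_sub_C]
      · intro k hk; exact Polynomial.X_sub_C_ne_zero _
    have h2 := Finset.card_erase_of_mem hk₀
    have h3 : 1 ≤ S.card := Finset.card_pos.2 ⟨k₀, hk₀⟩
    omega
  have hsum : ∑ k ∈ S, d k * P.eval (v k) = 0 := by
    have step : ∀ k ∈ S, d k * P.eval (v k) =
        ∑ j ∈ Finset.range S.card, P.coeff j * (d k * v k ^ j) := by
      intro k hk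
      rw [Polynomial.eval_eq_sum_range' hPdeg, Finset.mul_sum]
      exact Finset.sum_congr rfl fun j _ => by ring
    rw [Finset.sum_congr rfl step, Finset.sum_comm]
    refine Finset.sum_eq_zero fun j hj => ?_
    rw [← Finset.mul_sum, h j (Finset.mem_range.1 hj), mul_zero]
  have heval : ∀ k ∈ S, k ≠ k₀ → P.eval (v k) = 0 := by
    intro k hk hne
    rw [hP, Polynomial.eval_prod]
    exact Finset.prod_eq_zero (Finset.mem_erase.2 ⟨hne, hk⟩) (by simp)
  have hsum' : ∑ k ∈ S, d k * P.eval (v k) = d k₀ * P.eval (v k₀) :=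
    Finset.sum_eq_single_of_mem k₀ hk₀ (fun k hk hne => by rw [heval k hk hne, mul_zero])
  have hP0 : P.eval (v k₀) ≠ 0 := by
    rw [hP, Polynomial.eval_prod]
    refine Finset.prod_ne_zero_iff.2 fun k hk => ?_
    simp only [Polynomial.eval_sub, Polynomial.eval_X, Polynomial.eval_C]
    have hkS : k ∈ S := Finset.mem_of_mem_erase hk
    exact sub_ne_zero.2 fun he => (Finset.mem_erase.1 hk).1 (hv hkS hk₀ he.symm)
  rw [hsum'] at hsum
  exact (mul_eq_zero.1 hsum).resolve_right hP0


/-- if the defining set `D` contains `τ + 𝒮(t)` (mod `(r₁, r₂)`), then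
every nonzero codeword vanishing on `D` has weight at least `2t + 1`. -/
theorem stmt_16 {F L : Type*} [Field F] [Fintype F] [Field L] [Algebra F L]
    (r₁ r₂ t : ℕ) (ht : 1 ≤ t) (ht₁ : t ≤ r₁ / 2) (ht₂ : t ≤ r₂ / 2)
    (hq : Nat.Coprime (r₁ * r₂) (Fintype.card F))
    (α₁ α₂ : L) (hα₁ : IsPrimitiveRoot α₁ r₁) (hα₂ : IsPrimitiveRoot α₂ r₂)
    (D : Set (ℕ × ℕ)) (hD : D ⊆ Ibox r₁ r₂)
    (τ : ℕ × ℕ) (hτ : τ ∈ Ibox r₁ r₂)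
    (hτD : ∀ n ∈ Sset t, ((τ.1 + n.1) % r₁, (τ.2 + n.2) % r₂) ∈ D)
    (c : AddMonoidAlgebra F (ℕ × ℕ)) (hc : c ≠ 0) (hcI : ↑c.coeff.support ⊆ Ibox r₁ r₂)
    (hvan : ∀ m ∈ D, evalAt c (α₁ ^ m.1) (α₂ ^ m.2) = (0 : L)) :
    2 * t + 1 ≤ c.coeff.support.card := by
  classical
  by_contra hcon
  push_neg at hcon
  have hw : c.coeff.support.card ≤ 2 * t := by omega
  have hr₁ : 2 ≤ r₁ := by omega
  have hr₂ : 2 ≤ r₂ := by omega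
  have hα₁o : α₁ ≠ 0 := hα₁.ne_zero (by omega)
  have hα₂o : α₂ ≠ 0 := hα₂.ne_zero (by omega)
  set S := c.coeff.support with hSdef
  have hbox : ∀ k ∈ S, k.1 < r₁ ∧ k.2 < r₂ := fun k hk => hcI hk
  set d : ℕ × ℕ → L :=
    fun k => algebraMap F L (c.coeff k) * α₁ ^ (k.1 * τ.1) * α₂ ^ (k.2 * τ.2) with hddef
  have hd : ∀ k ∈ S, d k ≠ 0 := by
    intro k hk
    have h1 : c.coeff k ≠ 0 := Finsupp.mem_support_iff.1 hk
    have h2 : algebraMap F L (c.coeff k) ≠ 0 := fun h =>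
      h1 ((algebraMap F L).injective (by rw [h, map_zero]))
    exact mul_ne_zero (mul_ne_zero h2 (pow_ne_zero _ hα₁o)) (pow_ne_zero _ hα₂o)
  have key : ∀ n ∈ Sset t, ∑ k ∈ S, d k * (α₁ ^ k.1) ^ n.1 * (α₂ ^ k.2) ^ n.2 = 0 := by
    intro n hn
    have hv := hvan _ (hτD n hn)
    rw [evalAt] at hv
    rw [← hv]
    refine Finset.sum_congr hSdef fun k hk => ?_
    have e1 : (α₁ ^ ((τ.1 + n.1) % r₁)) ^ k.1 = α₁ ^ (k.1 * τ.1) * (α₁ ^ k.1) ^ n.1 := by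
      rw [pow_mod_cancel hα₁.pow_eq_one, ← pow_mul, ← pow_mul, ← pow_add]
      congr 1; ring
    have e2 : (α₂ ^ ((τ.2 + n.2) % r₂)) ^ k.2 = α₂ ^ (k.2 * τ.2) * (α₂ ^ k.2) ^ n.2 := by
      rw [pow_mod_cancel hα₂.pow_eq_one, ← pow_mul, ← pow_mul, ← pow_add]
      congr 1; ring
    show d k * (α₁ ^ k.1) ^ n.1 * (α₂ ^ k.2) ^ n.2 =
      algebraMap F L (c.coeff k) * (α₁ ^ ((τ.1 + n.1) % r₁)) ^ k.1 *
        (α₂ ^ ((τ.2 + n.2) % r₂)) ^ k.2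
    rw [e1, e2, hddef]
    ring
  set X := S.image Prod.fst with hXdef
  set m := X.card with hmdef
  have hmw : m ≤ S.card := Finset.card_image_le
  have hXlt : ∀ a ∈ X, a < r₁ := by
    intro a ha
    obtain ⟨k, hk, rfl⟩ := Finset.mem_image.1 ha
    exact (hbox k hk).1
  have hXinj : Set.InjOn (fun a => α₁ ^ a) X := fun a ha b hb hab =>
    hα₁.pow_inj (hXlt a ha) (hXlt b hb) hab
  have grp : ∀ i j : ℕ, (i, j) ∈ Sset t →
      ∑ a ∈ X, (∑ k ∈ S.filter (fun k => k.1 = a), d k * (α₂ ^ k.2) ^ j) * (α₁ ^ a) ^ i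
        = 0 := by
    intro i j hij
    have h0 := key (i, j) hij
    rw [← h0, ← Finset.sum_fiberwise_of_maps_to
      (fun k (hk : k ∈ S) => Finset.mem_image_of_mem Prod.fst hk)
      (fun k => d k * (α₁ ^ k.1) ^ i * (α₂ ^ k.2) ^ j)]
    refine Finset.sum_congr rfl fun a _ => ?_
    rw [Finset.sum_mul]
    refine Finset.sum_congr rfl fun k hk => ?_
    have hka : k.1 = a := (Finset.mem_filter.1 hk).2
    rw [← hka]; ring
  have classSum : ∀ j : ℕ, (∀ i < m, ((i, j) : ℕ × ℕ) ∈ Sset t) →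
      ∀ a ∈ X, ∑ k ∈ S.filter (fun k => k.1 = a), d k * (α₂ ^ k.2) ^ j = 0 := by
    intro j hj
    exact vand X (fun a => α₁ ^ a) _ hXinj (fun i hi => grp i j (hj i hi))
  have hSne : S.Nonempty := Finsupp.support_nonempty_iff.2 (fun h => hc (AddMonoidAlgebra.coeff_eq_zero.1 h))
  have hXne : X.Nonempty := hSne.image _
  have hm1 : 1 ≤ m := Finset.card_pos.2 hXne
  have hfibcard : S.card = ∑ a ∈ X, (S.filter (fun k => k.1 = a)).card :=
    Finset.card_eq_sum_card_fiberwise fun k hk => Finset.mem_image_of_mem Prod.fst hk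
  have h2class : ∀ a ∈ X, 2 ≤ (S.filter (fun k => k.1 = a)).card := by
    intro a ha
    have hsum0 : ∑ k ∈ S.filter (fun k => k.1 = a), d k = 0 := by
      have := classSum 0 (fun i hi => Or.inr (Or.inl ⟨rfl, by omega⟩)) a ha
      simpa using this
    obtain ⟨k₀, hk₀, rfl⟩ := Finset.mem_image.1 ha
    have hne : (S.filter (fun k => k.1 = k₀.1)).Nonempty :=
      ⟨k₀, Finset.mem_filter.2 ⟨hk₀, rfl⟩⟩
    by_contra hlt
    push_neg at hlt
    interval_cases h : (S.filter (fun k => k.1 = k₀.1)).card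
    · exact Finset.card_ne_zero_of_mem hne.choose_spec h
    · obtain ⟨k₁, hk₁⟩ := Finset.card_eq_one.1 h
      rw [hk₁, Finset.sum_singleton] at hsum0
      have : k₁ ∈ S.filter (fun k => k.1 = k₀.1) := by rw [hk₁]; exact Finset.mem_singleton_self k₁
      exact hd k₁ (Finset.mem_filter.1 this).1 hsum0
  have h2m : 2 * m ≤ S.card := by
    calc 2 * m = ∑ _a ∈ X, 2 := by rw [Finset.sum_const, smul_eq_mul]; ring
    _ ≤ ∑ a ∈ X, (S.filter (fun k => k.1 = a)).card := Finset.sum_le_sum h2class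
    _ = S.card := hfibcard.symm
  have hmt : m ≤ t := by omega
  by_cases hm : m = 1
  · have hinj2 : Set.InjOn (fun k : ℕ × ℕ => α₂ ^ k.2) S := by
      intro k hk k' hk' he
      have hX1 : ∀ a ∈ X, ∀ b ∈ X, a = b := Finset.card_le_one.1 (le_of_eq hm)
      have h1 : k.1 = k'.1 := hX1 _ (Finset.mem_image_of_mem Prod.fst hk) _
        (Finset.mem_image_of_mem Prod.fst hk')
      have h2 : k.2 = k'.2 := hα₂.pow_inj (hbox k hk).2 (hbox k' hk').2 he
      exact Prod.ext h1 h2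
    have hz := vand S (fun k => α₂ ^ k.2) d hinj2 (fun j hj => by
      have := key (0, j) (Or.inl ⟨rfl, by omega⟩)
      simpa using this)
    obtain ⟨k, hk⟩ := hSne
    exact hd k hk (hz k hk)
  · have hm2 : 2 ≤ m := by omega
    have hbig : ∀ a ∈ X, t + 3 ≤ (S.filter (fun k => k.1 = a)).card + m := by
      intro a ha
      by_contra hsmall
      push_neg at hsmall
      have hinj : Set.InjOn (fun k : ℕ × ℕ => α₂ ^ k.2) (S.filter (fun k => k.1 = a)) := by
        intro k hk k' hk' he
        have hk1 := Finset.mem_filter.1 hk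
        have hk2 := Finset.mem_filter.1 hk'
        have h2 : k.2 = k'.2 :=
          hα₂.pow_inj (hbox k hk1.1).2 (hbox k' hk2.1).2 he
        exact Prod.ext (hk1.2.trans hk2.2.symm) h2
      have hz := vand (S.filter (fun k => k.1 = a)) (fun k => α₂ ^ k.2) d hinj
        (fun j hj => classSum j (fun i hi => by
          simp only [Sset, Set.mem_setOf_eq, Prod.mk.injEq]; omega) a ha)
      obtain ⟨k₀, hk₀, rfl⟩ := Finset.mem_image.1 ha
      have hmem : k₀ ∈ S.filter (fun k => k.1 = k₀.1) := Finset.mem_filter.2 ⟨hk₀, rfl⟩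
      exact hd k₀ hk₀ (hz k₀ hmem)
    have hsum : m * (t + 3) ≤ S.card + m * m := by
      calc m * (t + 3) = ∑ _a ∈ X, (t + 3) := by rw [Finset.sum_const, smul_eq_mul]
      _ ≤ ∑ a ∈ X, ((S.filter (fun k => k.1 = a)).card + m) := Finset.sum_le_sum hbig
      _ = S.card + m * m := by
          rw [Finset.sum_add_distrib, ← hfibcard, Finset.sum_const, smul_eq_mul]
    nlinarith [hsum, hm2, hmt, hw, Nat.mul_le_mul_left m hmt]
end

section
/- Let r₁, r₂ ≥ 2 be integers, I = {0,…,r₁−1}×{0,…,r₂−1}, and D ⊆ I. For k ∈ {1,2}, given b_k ≥ 0 and 2 ≤ δ_k ≤ r_k, set J_k = { (b_k + c) mod r_k : 0 ≤ c ≤ δ_k − 2 } and A_k = { (i₁,i₂) ∈ I : i_k ∈ J_k }. Then: (1) if A_k ⊆ D for some k ∈ {1,2}, then for every integer t with 1 ≤ t ≤ min(⌊(δ_k−1)/2⌋, ⌊r₁/2⌋, ⌊r₂/2⌋) there exists τ ∈ I such that ((τ₁+n₁) mod r₁, (τ₂+n₂) mod r₂) ∈ D for all n ∈ 𝒮(t);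 and (2) if A₁ ∪ A₂ ⊆ D, then the same conclusion holds for every integer t with 1 ≤ t ≤ min(δ₁+δ₂−3, ⌊r₁/2⌋, ⌊r₂/2⌋). -/
/-- The set `A₁` of indices whose first coordinate lies in the consecutive run
`J₁ = {(b+c) mod r₁ : 0 ≤ c ≤ δ−2}`. -/
def Aset1 (r₁ r₂ b δ : ℕ) : Set (ℕ × ℕ) :=
  { p | p ∈ Ibox r₁ r₂ ∧ ∃ c ≤ δ - 2, p.1 = (b + c) % r₁ }

/-- The set `A₂` of indices whose second coordinate lies in the consecutive run
`J₂ = {(b+c) mod r₂ : 0 ≤ c ≤ δ−2}`. -/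
def Aset2 (r₁ r₂ b δ : ℕ) : Set (ℕ × ℕ) :=
  { p | p ∈ Ibox r₁ r₂ ∧ ∃ c ≤ δ - 2, p.2 = (b + c) % r₂ }

/-- a defining set containing `A_k` (resp. `A₁ ∪ A₂`) contains a set of
the form `τ + 𝒮(t)` (mod `(r₁,r₂)`) for every admissible `t`. -/
theorem stmt_17 (r₁ r₂ : ℕ) (hr₁ : 2 ≤ r₁) (hr₂ : 2 ≤ r₂)
    (D : Set (ℕ × ℕ)) (hD : D ⊆ Ibox r₁ r₂)
    (b₁ b₂ δ₁ δ₂ : ℕ) (hδ₁ : 2 ≤ δ₁) (hδ₁r : δ₁ ≤ r₁) (hδ₂ : 2 ≤ δ₂) (hδ₂r : δ₂ ≤ r₂) :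
    ((Aset1 r₁ r₂ b₁ δ₁ ⊆ D) → ∀ t, 1 ≤ t →
      t ≤ min ((δ₁ - 1) / 2) (min (r₁ / 2) (r₂ / 2)) →
      ∃ τ ∈ Ibox r₁ r₂, ∀ n ∈ Sset t, ((τ.1 + n.1) % r₁, (τ.2 + n.2) % r₂) ∈ D) ∧
    ((Aset2 r₁ r₂ b₂ δ₂ ⊆ D) → ∀ t, 1 ≤ t →
      t ≤ min ((δ₂ - 1) / 2) (min (r₁ / 2) (r₂ / 2)) →
      ∃ τ ∈ Ibox r₁ r₂, ∀ n ∈ Sset t, ((τ.1 + n.1) % r₁, (τ.2 + n.2) % r₂) ∈ D) ∧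
    ((Aset1 r₁ r₂ b₁ δ₁ ∪ Aset2 r₁ r₂ b₂ δ₂ ⊆ D) → ∀ t, 1 ≤ t →
      t ≤ min (δ₁ + δ₂ - 3) (min (r₁ / 2) (r₂ / 2)) →
      ∃ τ ∈ Ibox r₁ r₂, ∀ n ∈ Sset t, ((τ.1 + n.1) % r₁, (τ.2 + n.2) % r₂) ∈ D) := by
  have hr₁0 : 0 < r₁ := by omega
  have hr₂0 : 0 < r₂ := by omega
  refine ⟨?_, ?_, ?_⟩
  · intro hA t ht htle
    have h2t : 2 * t ≤ δ₁ - 1 := by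
      have h := le_trans htle (min_le_left _ _); omega
    refine ⟨(b₁ % r₁, 0), ⟨Nat.mod_lt _ hr₁0, hr₂0⟩, ?_⟩
    intro n hn
    apply hA
    refine ⟨⟨Nat.mod_lt _ hr₁0, Nat.mod_lt _ hr₂0⟩, n.1, ?_, Nat.mod_add_mod b₁ r₁ n.1⟩
    rcases hn with h | h | h <;> omega
  · intro hA t ht htle
    have h2t : 2 * t ≤ δ₂ - 1 := by
      have h := le_trans htle (min_le_left _ _); omega
    refine ⟨(0, b₂ % r₂), ⟨hr₁0, Nat.mod_lt _ hr₂0⟩, ?_⟩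
    intro n hn
    apply hA
    refine ⟨⟨Nat.mod_lt _ hr₁0, Nat.mod_lt _ hr₂0⟩, n.2, ?_, Nat.mod_add_mod b₂ r₂ n.2⟩
    rcases hn with h | h | h <;> omega
  · intro hA t ht htle
    have h3 : t ≤ δ₁ + δ₂ - 3 := le_trans htle (min_le_left _ _)
    refine ⟨(b₁ % r₁, b₂ % r₂), ⟨Nat.mod_lt _ hr₁0, Nat.mod_lt _ hr₂0⟩, ?_⟩
    intro n hn
    apply hA
    by_cases h1 : n.1 ≤ δ₁ - 2
    · exact Or.inl ⟨⟨Nat.mod_lt _ hr₁0, Nat.mod_lt _ hr₂0⟩, n.1, h1,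
        Nat.mod_add_mod b₁ r₁ n.1⟩
    · refine Or.inr ⟨⟨Nat.mod_lt _ hr₁0, Nat.mod_lt _ hr₂0⟩, n.2, ?_,
        Nat.mod_add_mod b₂ r₂ n.2⟩
      rcases hn with h | h | h <;> omega
end
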